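/- Let k be an odd positive integer and define Φ(q₁,…,q_k) = Σ_{1 ≤ i < j ≤ k} (−1)^{i+j} ω(q_i, q_j) on (ℝ²ⁿ)^k, where ω is the standard symplectic form. Then the linear subspace C = { (z, z̄) ∈ (ℝ²ⁿ)^k × (ℝ²ⁿ)^k : z̄_i = z_{i+1} for all i (indices mod k) }, viewed in (T*ℝ²ⁿ)^k via the componentwise symplectic identification, is the graph of the differential of Φ. -/

import Mathlib

open Finset

/-- The standard symplectic form `ω = dp ∧ dq` on `ℝ²ⁿ = ℝⁿ × ℝⁿ`. -/
noncomputable def stdOmega {n : ℕ} (v w : (Fin n → ℝ) × (Fin n → ℝ)) : ℝ :=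
  (∑ i, v.2 i * w.1 i) - ∑ i, v.1 i * w.2 i

/-- Euclidean pairing of a covector with a vector on `ℝ²ⁿ = ℝⁿ × ℝⁿ`. -/
noncomputable def dotE {n : ℕ} (p v : (Fin n → ℝ) × (Fin n → ℝ)) : ℝ :=
  (∑ i, p.1 i * v.1 i) + ∑ i, p.2 i * v.2 i

/-- Sign coefficient on natural numbers. -/
noncomputable def en (a b : ℕ) : ℝ :=
  if a < b then (-1 : ℝ) ^ (a + b) else if b < a then -(-1 : ℝ) ^ (a + b) else 0

lemma en_shift {m a b : ℕ} (hm : Even m) (ha : a ≤ m) (hb : b ≤ m) :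
    en a b + en a (if b = 0 then m else b - 1)
      = (if b = a then (1:ℝ) else 0) - (if b = (if a = m then 0 else a + 1) then 1 else 0) := by
  have hpred : ∀ c : ℕ, 1 ≤ c → (-1:ℝ)^(a+(c-1)) = -(-1:ℝ)^(a+c) := by
    intro c hc
    have h : a + c = (a + (c-1)) + 1 := by omega
    rw [h, pow_succ]; ring
  have hma : (-1:ℝ)^(a+m) = (-1:ℝ)^a := by
    rw [pow_add, hm.neg_one_pow, mul_one]
  rcases Nat.eq_zero_or_pos b with hb0 | hb0
  · subst hb0
    rw [if_pos rfl]
    rcases Nat.lt_or_ge a m with ham | ham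
    · have ham' : a ≠ m := by omega
      rw [if_neg ham']
      rcases Nat.eq_zero_or_pos a with ha0 | ha0
      · subst ha0
        have hm0 : 0 < m := ham
        rw [show en 0 0 = 0 by simp [en], show en 0 m = (-1:ℝ)^(0+m) by simp [en, hm0]]
        have h2 : (0:ℕ) ≠ 0 + 1 := by omega
        rw [if_pos rfl, if_neg h2]
        simp [hm.neg_one_pow]
      · rw [show en a 0 = -(-1:ℝ)^(a+0) by simp [en, ha0],
            show en a m = (-1:ℝ)^(a+m) by simp [en, ham]]
        have h1 : (0 : ℕ) ≠ a := by omega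
        have h2 : (0 : ℕ) ≠ a + 1 := by omega
        rw [if_neg h1, if_neg h2]
        simp [hma, pow_add]
    · have haem : a = m := le_antisymm ha ham
      subst haem
      rw [if_pos rfl]
      rcases Nat.eq_zero_or_pos a with ha0 | ha0
      · subst ha0; simp [en]
      · have h1 : (0:ℕ) ≠ a := by omega
        rw [show en a 0 = -(-1:ℝ)^(a+0) by simp [en, ha0], show en a a = 0 by simp [en],
            if_neg h1, if_pos rfl]
        have h2 := hm.neg_one_pow (α := ℝ)
        simp only [add_zero, h2]
        norm_num
  · have hb0' : b ≠ 0 := by omega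
    simp only [if_neg hb0']
    rcases lt_trichotomy b a with h | h | h
    · have h1 : b - 1 < a := by omega
      rw [show en a b = -(-1:ℝ)^(a+b) by simp [en, h, not_lt.2 h.le]]
      rw [show en a (b-1) = -(-1:ℝ)^(a+(b-1)) by simp [en, h1, not_lt.2 h1.le]]
      rw [hpred b hb0]
      have h2 : b ≠ a := by omega
      have h3 : ¬ (b = if a = m then 0 else a + 1) := by split_ifs <;> omega
      simp [h2, h3]
    · subst h
      have h1 : b - 1 < b := by omega
      rw [show en b b = 0 by simp [en], show en b (b-1) = -(-1:ℝ)^(b+(b-1)) by simp [en, h1, not_lt.2 h1.le]]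
      rw [hpred b hb0]
      have h3 : ¬ (b = if b = m then 0 else b + 1) := by split_ifs <;> omega
      have he : Even (b + b) := ⟨b, rfl⟩
      simp [h3, he.neg_one_pow]
    · rcases Nat.lt_or_ge (a+1) b with h2 | h2
      · -- b > a + 1
        have h1 : a < b - 1 := by omega
        rw [show en a b = (-1:ℝ)^(a+b) by simp [en, h],
            show en a (b-1) = (-1:ℝ)^(a+(b-1)) by simp [en, h1]]
        rw [hpred b hb0]
        have h3 : b ≠ a := by omega
        have h4 : ¬ (b = if a = m then 0 else a + 1) := by split_ifs <;> omega
        simp [h3, h4]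
      · -- b = a + 1
        have hba : b = a + 1 := by omega
        subst hba
        have ham : a ≠ m := by omega
        rw [show en a (a+1) = (-1:ℝ)^(a+(a+1)) by simp [en],
            show en a (a+1-1) = 0 by simp [en]]
        have h3 : a + 1 ≠ a := by omega
        have ho : Odd (a + (a+1)) := ⟨a, by omega⟩
        simp [h3, ham, ho.neg_one_pow]

lemma en_row {m a b : ℕ} (ha : a < m) (hb : b ≤ m) :
    en a b + en (a+1) b = (if b = a then (1:ℝ) else 0) - (if b = a + 1 then 1 else 0) := by
  rcases lt_trichotomy b a with h | h | h
  · rw [show en a b = -(-1:ℝ)^(a+b) by simp [en, h, not_lt.2 h.le],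
        show en (a+1) b = -(-1:ℝ)^(a+1+b) by simp [en, show b < a+1 by omega, show ¬ a+1<b by omega]]
    have h2 : b ≠ a := by omega
    have h3 : b ≠ a + 1 := by omega
    have : a + 1 + b = (a + b) + 1 := by omega
    rw [this, pow_succ]
    simp [h2, h3]
  · subst h
    rw [show en b b = 0 by simp [en],
        show en (b+1) b = -(-1:ℝ)^(b+1+b) by simp [en, show b < b+1 by omega, show ¬ b+1<b by omega]]
    have ho : Odd (b + 1 + b) := ⟨b, by omega⟩
    simp [ho.neg_one_pow]
  · rcases Nat.lt_or_ge (a+1) b with h2 | h2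
    · rw [show en a b = (-1:ℝ)^(a+b) by simp [en, h],
          show en (a+1) b = (-1:ℝ)^(a+1+b) by simp [en, h2]]
      have h3 : b ≠ a := by omega
      have h4 : b ≠ a + 1 := by omega
      have : a + 1 + b = (a + b) + 1 := by omega
      rw [this, pow_succ]
      simp [h3, h4]
    · have hba : b = a + 1 := by omega
      subst hba
      rw [show en a (a+1) = (-1:ℝ)^(a+(a+1)) by simp [en],
          show en (a+1) (a+1) = 0 by simp [en]]
      have ho : Odd (a + (a+1)) := ⟨a, by omega⟩
      simp [ho.neg_one_pow]

/-- Sign coefficient on `Fin k`. -/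
noncomputable def eps {k : ℕ} (i j : Fin k) : ℝ := en i.val j.val

lemma eps_self {k : ℕ} (i : Fin k) : eps i i = 0 := by simp [eps, en]

lemma eps_shift {m : ℕ} (hk : Odd (m+1)) (i j : Fin (m+1)) :
    eps i j + eps i (j-1) = (if j = i then (1:ℝ) else 0) - (if j = i + 1 then 1 else 0) := by
  have hm : Even m := by rcases hk with ⟨t, ht⟩; exact ⟨t, by omega⟩
  have h1 : ((j - 1 : Fin (m+1)) : ℕ) = if (j:ℕ) = 0 then m else (j:ℕ) - 1 := by
    rw [Fin.coe_sub_one]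
    congr 1
    rw [Fin.ext_iff, Fin.val_zero]
  have h2 : ((i + 1 : Fin (m+1)) : ℕ) = if (i:ℕ) = m then 0 else (i:ℕ) + 1 := by
    rw [Fin.val_add_one]
    congr 1
    simp [Fin.ext_iff, Fin.last]
  have h3 : (j = i) ↔ ((j:ℕ) = (i:ℕ)) := Fin.ext_iff
  have h4 : (j = i + 1) ↔ ((j:ℕ) = if (i:ℕ) = m then 0 else (i:ℕ) + 1) := by
    rw [Fin.ext_iff, h2]
  rw [show eps i (j-1) = en i.val ((j-1 : Fin (m+1)) : ℕ) from rfl, h1]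
  simp only [eps, h3 ,h4]
  exact en_shift hm (Nat.lt_succ_iff.mp i.isLt) (Nat.lt_succ_iff.mp j.isLt)

lemma eps_row {m : ℕ} (i j : Fin (m+1)) (hi : (i:ℕ) < m) :
    eps i j + eps (i+1) j = (if j = i then (1:ℝ) else 0) - (if j = i + 1 then 1 else 0) := by
  have h2 : ((i + 1 : Fin (m+1)) : ℕ) = (i:ℕ) + 1 := by
    rw [Fin.val_add_one, if_neg]
    simp only [Fin.ext_iff, Fin.val_last]
    omega
  have h3 : (j = i) ↔ ((j:ℕ) = (i:ℕ)) := Fin.ext_iff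
  have h4 : (j = i + 1) ↔ ((j:ℕ) = (i:ℕ) + 1) := by rw [Fin.ext_iff, h2]
  simp only [eps, h2, h3, h4]
  exact en_row hi (Nat.lt_succ_iff.mp j.isLt)

section ModuleLemmas
variable {M : Type*} [AddCommGroup M] [Module ℝ M]

lemma delta_sum {k : ℕ} (i i' : Fin k) (w : Fin k → M) :
    ∑ j, ((if j = i then (1:ℝ) else 0) - (if j = i' then 1 else 0)) • w j = w i - w i' := by
  simp only [sub_smul, ite_smul, one_smul, zero_smul, Finset.sum_sub_distrib]
  rw [Finset.sum_ite_eq' Finset.univ i w, Finset.sum_ite_eq' Finset.univ i' w]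
  simp

lemma tele {m : ℕ} (hk : Odd (m+1)) (z : Fin (m+1) → M) (i : Fin (m+1)) :
    ∑ j, eps i j • (z j + z (j+1)) = z i - z (i+1) := by
  have h1 : ∑ j, eps i j • z (j+1) = ∑ j, eps i (j-1) • z j := by
    apply Fintype.sum_equiv (Equiv.addRight (1 : Fin (m+1)))
    intro x
    simp only [Equiv.coe_addRight]
    rw [add_sub_cancel_right]
  calc ∑ j, eps i j • (z j + z (j+1))
      = (∑ j, eps i j • z j) + ∑ j, eps i j • z (j+1) := by
        simp [smul_add, Finset.sum_add_distrib]
    _ = ∑ j, (eps i j + eps i (j-1)) • z j := by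
        rw [h1, ← Finset.sum_add_distrib]
        simp [add_smul]
    _ = ∑ j, ((if j = i then (1:ℝ) else 0) - (if j = i + 1 then 1 else 0)) • z j := by
        refine Finset.sum_congr rfl fun j _ => ?_
        rw [eps_shift hk]
    _ = z i - z (i+1) := delta_sum i (i+1) z

lemma comb {k : ℕ} [NeZero k] (hk : Odd k) (z zb : Fin k → M) :
    (∀ i, zb i = z (i+1)) ↔ ∀ i, ∑ j, eps i j • (z j + zb j) = z i - zb i := by
  obtain ⟨m, rfl⟩ : ∃ m, k = m + 1 := ⟨k-1, by have := NeZero.pos k; omega⟩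
  constructor
  · intro h i
    calc ∑ j, eps i j • (z j + zb j) = ∑ j, eps i j • (z j + z (j+1)) := by
          refine Finset.sum_congr rfl fun j _ => ?_
          rw [h j]
      _ = z i - z (i+1) := tele hk z i
      _ = z i - zb i := by rw [h i]
  · intro H
    have step : ∀ i : Fin (m+1), (i:ℕ) < m → zb i = z (i+1) := by
      intro i hi
      have key : ∑ j, (eps i j + eps (i+1) j) • (z j + zb j)
          = (z i - zb i) + (z (i+1) - zb (i+1)) := by
        rw [← H i, ← H (i+1), ← Finset.sum_add_distrib]
        refine Finset.sum_congr rfl fun j _ => ?_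
        rw [add_smul]
      have key2 : ∑ j, (eps i j + eps (i+1) j) • (z j + zb j)
          = (z i + zb i) - (z (i+1) + zb (i+1)) := by
        calc ∑ j, (eps i j + eps (i+1) j) • (z j + zb j)
            = ∑ j, ((if j = i then (1:ℝ) else 0) - (if j = i + 1 then 1 else 0)) • (z j + zb j) := by
              refine Finset.sum_congr rfl fun j _ => ?_
              rw [eps_row i j hi]
          _ = (z i + zb i) - (z (i+1) + zb (i+1)) := delta_sum i (i+1) _
      have heq := key.symm.trans key2
      have hd : ((z i - zb i) + (z (i+1) - zb (i+1))) - ((z i + zb i) - (z (i+1) + zb (i+1)))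
          = (2:ℝ) • (z (i+1) - zb i) := by module
      rw [heq, sub_self] at hd
      have h0 : z (i+1) - zb i = 0 := by
        have h2 : (2:ℝ) ≠ 0 := two_ne_zero
        have := hd.symm
        rcases smul_eq_zero.mp this with h | h
        · exact absurd h h2
        · exact h
      exact (sub_eq_zero.mp h0).symm
    intro i
    rcases Nat.lt_or_ge (i:ℕ) m with hi | hi
    · exact step i hi
    · have key : ∑ j, eps i j • (z j + zb j) = ∑ j, eps i j • (z j + z (j+1)) := by
        refine Finset.sum_congr rfl fun j _ => ?_
        rcases eq_or_ne j i with rfl | hji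
        · rw [eps_self]; simp
        · have hj : (j:ℕ) < m := by
            have h1 := Nat.lt_succ_iff.mp j.isLt
            have h2 := Nat.lt_succ_iff.mp i.isLt
            have : (j:ℕ) ≠ (i:ℕ) := fun h => hji (Fin.ext h)
            omega
          rw [step j hj]
      have hH := H i
      rw [key, tele hk z i] at hH
      exact (sub_right_injective hH).symm
end ModuleLemmas
section Deriv
variable {n k : ℕ}

noncomputable def coordFst (i : Fin k) (a : Fin n) :
    (Fin k → (Fin n → ℝ) × (Fin n → ℝ)) →L[ℝ] ℝ :=
  (ContinuousLinearMap.proj a).comp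
    ((ContinuousLinearMap.fst ℝ (Fin n → ℝ) (Fin n → ℝ)).comp (ContinuousLinearMap.proj i))

noncomputable def coordSnd (i : Fin k) (a : Fin n) :
    (Fin k → (Fin n → ℝ) × (Fin n → ℝ)) →L[ℝ] ℝ :=
  (ContinuousLinearMap.proj a).comp
    ((ContinuousLinearMap.snd ℝ (Fin n → ℝ) (Fin n → ℝ)).comp (ContinuousLinearMap.proj i))

@[simp] lemma coordFst_apply (i : Fin k) (a : Fin n)
    (q : Fin k → (Fin n → ℝ) × (Fin n → ℝ)) : coordFst i a q = (q i).1 a := rfl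

@[simp] lemma coordSnd_apply (i : Fin k) (a : Fin n)
    (q : Fin k → (Fin n → ℝ) × (Fin n → ℝ)) : coordSnd i a q = (q i).2 a := rfl

noncomputable def Dom (i j : Fin k) (q : Fin k → (Fin n → ℝ) × (Fin n → ℝ)) :
    (Fin k → (Fin n → ℝ) × (Fin n → ℝ)) →L[ℝ] ℝ :=
  (∑ a, (((q i).2 a) • coordFst j a + ((q j).1 a) • coordSnd i a))
  - ∑ a, (((q i).1 a) • coordSnd j a + ((q j).2 a) • coordFst i a)

lemma hasFDeriv_omega (i j : Fin k) (q : Fin k → (Fin n → ℝ) × (Fin n → ℝ)) :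
    HasFDerivAt (fun q => stdOmega (q i) (q j)) (Dom i j q) q := by
  have h1 : ∀ a : Fin n,
      HasFDerivAt (fun q : Fin k → (Fin n → ℝ) × (Fin n → ℝ) => (q i).2 a * (q j).1 a)
        (((q i).2 a) • coordFst j a + ((q j).1 a) • coordSnd i a) q :=
    fun a => ((coordSnd i a).hasFDerivAt (x := q)).mul ((coordFst j a).hasFDerivAt (x := q))
  have h2 : ∀ a : Fin n,
      HasFDerivAt (fun q : Fin k → (Fin n → ℝ) × (Fin n → ℝ) => (q i).1 a * (q j).2 a)
        (((q i).1 a) • coordSnd j a + ((q j).2 a) • coordFst i a) q :=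
    fun a => ((coordFst i a).hasFDerivAt (x := q)).mul ((coordSnd j a).hasFDerivAt (x := q))
  have := (HasFDerivAt.fun_sum (u := Finset.univ) fun a _ => h1 a).sub
    (HasFDerivAt.fun_sum (u := Finset.univ) fun a _ => h2 a)
  exact this

noncomputable def DPhi (q : Fin k → (Fin n → ℝ) × (Fin n → ℝ)) :
    (Fin k → (Fin n → ℝ) × (Fin n → ℝ)) →L[ℝ] ℝ :=
  ∑ i : Fin k, ∑ j : Fin k, if i < j then ((-1:ℝ) ^ ((i:ℕ) + (j:ℕ))) • Dom i j q else 0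

lemma hasFDeriv_Phi (Φ : (Fin k → (Fin n → ℝ) × (Fin n → ℝ)) → ℝ)
    (hΦ : ∀ q, Φ q = ∑ i : Fin k, ∑ j : Fin k,
      if i < j then (-1 : ℝ) ^ ((i : ℕ) + (j : ℕ)) * stdOmega (q i) (q j) else 0)
    (q : Fin k → (Fin n → ℝ) × (Fin n → ℝ)) :
    HasFDerivAt Φ (DPhi q) q := by
  have hfe : Φ = fun q => ∑ i : Fin k, ∑ j : Fin k,
      if i < j then (-1 : ℝ) ^ ((i : ℕ) + (j : ℕ)) * stdOmega (q i) (q j) else 0 := funext hΦ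
  rw [hfe]
  unfold DPhi
  apply HasFDerivAt.fun_sum; intro i _
  apply HasFDerivAt.fun_sum; intro j _
  by_cases h : i < j
  · simp only [if_pos h]
    exact (hasFDeriv_omega i j q).const_mul _
  · simp only [if_neg h]
    exact hasFDerivAt_const 0 q
end Deriv

section Eval
variable {n k : ℕ}

lemma stdOmega_skew (v w : (Fin n → ℝ) × (Fin n → ℝ)) : stdOmega w v = - stdOmega v w := by
  have h1 : ∑ a, w.2 a * v.1 a = ∑ a, v.1 a * w.2 a :=
    Finset.sum_congr rfl fun a _ => mul_comm _ _
  have h2 : ∑ a, w.1 a * v.2 a = ∑ a, v.2 a * w.1 a :=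
    Finset.sum_congr rfl fun a _ => mul_comm _ _
  simp only [stdOmega, h1, h2]
  ring

lemma Dom_apply_single (i j i₀ : Fin k) (q : Fin k → (Fin n → ℝ) × (Fin n → ℝ))
    (v : (Fin n → ℝ) × (Fin n → ℝ)) :
    Dom i j q (Pi.single i₀ v) =
      (if i = i₀ then stdOmega v (q j) else 0) + (if j = i₀ then stdOmega (q i) v else 0) := by
  have hf : ∀ (l : Fin k) (a : Fin n),
      ((Pi.single i₀ v : Fin k → (Fin n → ℝ) × (Fin n → ℝ)) l).1 a
        = if l = i₀ then v.1 a else 0 := by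
    intro l a; rw [Pi.single_apply]; split_ifs <;> rfl
  have hs : ∀ (l : Fin k) (a : Fin n),
      ((Pi.single i₀ v : Fin k → (Fin n → ℝ) × (Fin n → ℝ)) l).2 a
        = if l = i₀ then v.2 a else 0 := by
    intro l a; rw [Pi.single_apply]; split_ifs <;> rfl
  simp only [Dom, ContinuousLinearMap.coe_sub', Pi.sub_apply, ContinuousLinearMap.coe_sum',
    Finset.sum_apply, ContinuousLinearMap.add_apply, ContinuousLinearMap.coe_smul',
    Pi.smul_apply, coordFst_apply, coordSnd_apply, smul_eq_mul, hf, hs]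
  by_cases hi : i = i₀ <;> by_cases hj : j = i₀ <;>
    simp only [hi, hj, if_pos, if_neg, if_true, if_false, eq_self_iff_true, mul_zero, zero_add,
      add_zero, stdOmega, Finset.sum_add_distrib] <;>
    simp [hi, hj, Finset.sum_add_distrib, mul_comm] <;> ring

lemma DPhi_apply_single (q : Fin k → (Fin n → ℝ) × (Fin n → ℝ)) (i₀ : Fin k)
    (v : (Fin n → ℝ) × (Fin n → ℝ)) :
    DPhi q (Pi.single i₀ v) = ∑ j : Fin k, eps i₀ j * stdOmega v (q j) := by
  have h1 : DPhi q (Pi.single i₀ v) = ∑ i : Fin k, ∑ j : Fin k,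
      if i < j then ((-1:ℝ) ^ ((i:ℕ) + (j:ℕ))) * (Dom i j q (Pi.single i₀ v)) else 0 := by
    simp only [DPhi, ContinuousLinearMap.coe_sum', Finset.sum_apply]
    refine Finset.sum_congr rfl fun i _ => Finset.sum_congr rfl fun j _ => ?_
    split_ifs <;> simp
  rw [h1]
  have h2 : ∀ i j : Fin k,
      (if i < j then ((-1:ℝ) ^ ((i:ℕ) + (j:ℕ))) * (Dom i j q (Pi.single i₀ v)) else 0)
      = (if i = i₀ then (if i < j then ((-1:ℝ) ^ ((i:ℕ) + (j:ℕ))) * stdOmega v (q j) else 0) else 0)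
        + (if j = i₀ then (if i < j then ((-1:ℝ) ^ ((i:ℕ) + (j:ℕ))) * stdOmega (q i) v else 0) else 0) := by
    intro i j
    rw [Dom_apply_single]
    split_ifs <;> ring
  simp only [h2, Finset.sum_add_distrib]
  have h3 : ∑ i : Fin k, ∑ j : Fin k,
      (if i = i₀ then (if i < j then ((-1:ℝ) ^ ((i:ℕ) + (j:ℕ))) * stdOmega v (q j) else 0) else 0)
      = ∑ j : Fin k, (if i₀ < j then ((-1:ℝ) ^ ((i₀:ℕ) + (j:ℕ))) * stdOmega v (q j) else 0) := by
    have : ∀ i : Fin k, ∑ j : Fin k,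
        (if i = i₀ then (if i < j then ((-1:ℝ) ^ ((i:ℕ) + (j:ℕ))) * stdOmega v (q j) else 0) else 0)
        = if i = i₀ then (∑ j : Fin k, if i < j then ((-1:ℝ) ^ ((i:ℕ) + (j:ℕ))) * stdOmega v (q j) else 0) else 0 := by
      intro i; by_cases h : i = i₀ <;> simp [h]
    rw [Finset.sum_congr rfl fun i _ => this i, Finset.sum_ite_eq' Finset.univ i₀]
    simp
  have h4 : ∑ i : Fin k, ∑ j : Fin k,
      (if j = i₀ then (if i < j then ((-1:ℝ) ^ ((i:ℕ) + (j:ℕ))) * stdOmega (q i) v else 0) else 0)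
      = ∑ i : Fin k, (if i < i₀ then ((-1:ℝ) ^ ((i:ℕ) + (i₀:ℕ))) * stdOmega (q i) v else 0) := by
    refine Finset.sum_congr rfl fun i _ => ?_
    rw [Finset.sum_ite_eq' Finset.univ i₀]
    simp
  rw [h3, h4, ← Finset.sum_add_distrib]
  refine Finset.sum_congr rfl fun j _ => ?_
  rcases lt_trichotomy i₀ j with h | h | h
  · have h' : ¬ j < i₀ := by omega
    have hv : (i₀:ℕ) < (j:ℕ) := h
    have hv' : ¬ (j:ℕ) < (i₀:ℕ) := by omega
    simp [eps, en, h, h', hv, hv']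
  · subst h
    simp [eps, en]
  · have h' : ¬ i₀ < j := by omega
    have hv : (j:ℕ) < (i₀:ℕ) := h
    have hv' : ¬ (i₀:ℕ) < (j:ℕ) := by omega
    rw [stdOmega_skew (q j) v]
    simp only [eps, en, if_neg hv', if_pos hv, if_neg h', if_pos h]
    rw [stdOmega_skew v (q j)]
    rw [show (j:ℕ) + (i₀:ℕ) = (i₀:ℕ) + (j:ℕ) by omega]
    ring
end Eval

section Pairing
variable {n k : ℕ}

lemma stdOmega_sum (v : (Fin n → ℝ) × (Fin n → ℝ)) (c : Fin k → ℝ)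
    (w : Fin k → (Fin n → ℝ) × (Fin n → ℝ)) :
    stdOmega v (∑ j, c j • w j) = ∑ j, c j * stdOmega v (w j) := by
  have h1 : ∀ a, (∑ j, c j • w j).1 a = ∑ j, c j * (w j).1 a := by
    intro a
    rw [Prod.fst_sum, Finset.sum_apply]
    simp
  have h2 : ∀ a, (∑ j, c j • w j).2 a = ∑ j, c j * (w j).2 a := by
    intro a
    rw [Prod.snd_sum, Finset.sum_apply]
    simp
  simp only [stdOmega, h1, h2, Finset.mul_sum]
  rw [show (∑ a, ∑ j, v.2 a * (c j * (w j).1 a)) = ∑ j, ∑ a, v.2 a * (c j * (w j).1 a) from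
        Finset.sum_comm,
      show (∑ a, ∑ j, v.1 a * (c j * (w j).2 a)) = ∑ j, ∑ a, v.1 a * (c j * (w j).2 a) from
        Finset.sum_comm,
      ← Finset.sum_sub_distrib]
  refine Finset.sum_congr rfl fun j _ => ?_
  rw [mul_sub, Finset.mul_sum, Finset.mul_sum]
  congr 1 <;> exact Finset.sum_congr rfl fun a _ => by ring

lemma pairing (p W : (Fin n → ℝ) × (Fin n → ℝ)) :
    (∀ v, dotE p v = stdOmega v W) ↔ ((∀ a, p.1 a = -W.2 a) ∧ (∀ a, p.2 a = W.1 a)) := by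
  constructor
  · intro h
    constructor
    · intro a
      have := h (Pi.single a 1, 0)
      simpa [dotE, stdOmega, Pi.single_apply, mul_ite, ite_mul,
        Finset.sum_ite_eq' Finset.univ a] using this
    · intro a
      have := h (0, Pi.single a 1)
      simpa [dotE, stdOmega, Pi.single_apply, mul_ite, ite_mul,
        Finset.sum_ite_eq' Finset.univ a] using this
  · rintro ⟨h1, h2⟩ v
    simp only [dotE, stdOmega]
    have e1 : ∑ b, p.1 b * v.1 b = ∑ b, -(v.1 b * W.2 b) :=
      Finset.sum_congr rfl fun b _ => by rw [h1 b]; ring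
    have e2 : ∑ b, p.2 b * v.2 b = ∑ b, v.2 b * W.1 b :=
      Finset.sum_congr rfl fun b _ => by rw [h2 b]; ring
    rw [e1, e2, Finset.sum_neg_distrib]
    ring
end Pairing


lemma main_row {n k : ℕ} (z zb : Fin k → (Fin n → ℝ) × (Fin n → ℝ)) (i : Fin k) :
    (∀ v, dotE (fun a => ((zb i).2 a - (z i).2 a) / 2, fun a => ((z i).1 a - (zb i).1 a) / 2) v
        = stdOmega v (∑ j, eps i j • ((1 / 2 : ℝ) • (z j + zb j))))
    ↔ (∑ j, eps i j • (z j + zb j) = z i - zb i) := by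
  have hW : (∑ j, eps i j • ((1 / 2 : ℝ) • (z j + zb j)))
      = (1 / 2 : ℝ) • ∑ j, eps i j • (z j + zb j) := by
    rw [Finset.smul_sum]
    exact Finset.sum_congr rfl fun j _ => smul_comm _ _ _
  rw [hW, pairing]
  constructor
  · rintro ⟨h1, h2⟩
    refine Prod.ext (funext fun a => ?_) (funext fun a => ?_)
    · have h := h2 a
      have h' : ((z i).1 a - (zb i).1 a) / 2
          = 1 / 2 * (∑ j, eps i j • (z j + zb j)).1 a := h
      show (∑ j, eps i j • (z j + zb j)).1 a = (z i).1 a - (zb i).1 a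
      linarith
    · have h := h1 a
      have h' : ((zb i).2 a - (z i).2 a) / 2
          = -(1 / 2 * (∑ j, eps i j • (z j + zb j)).2 a) := h
      show (∑ j, eps i j • (z j + zb j)).2 a = (z i).2 a - (zb i).2 a
      linarith
  · intro hS
    constructor
    · intro a
      show ((zb i).2 a - (z i).2 a) / 2
          = -(1 / 2 * (∑ j, eps i j • (z j + zb j)).2 a)
      rw [hS]
      show ((zb i).2 a - (z i).2 a) / 2 = -(1 / 2 * ((z i).2 a - (zb i).2 a))
      ring
    · intro a
      show ((z i).1 a - (zb i).1 a) / 2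
          = 1 / 2 * (∑ j, eps i j • (z j + zb j)).1 a
      rw [hS]
      show ((z i).1 a - (zb i).1 a) / 2 = 1 / 2 * ((z i).1 a - (zb i).1 a)
      ring

/-- For odd `k`, the subspace `C = {z̄_i = z_{i+1}}`, viewed in `(T*ℝ²ⁿ)^k` via the
componentwise symplectic identification, is the graph of the differential of
`Φ(q₁,…,q_k) = Σ_{i<j} (−1)^{i+j} ω(q_i,q_j)`. -/
theorem C_is_graph_of_dPhi (n k : ℕ) [NeZero k] (hk : Odd k)
    (Φ : (Fin k → (Fin n → ℝ) × (Fin n → ℝ)) → ℝ)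
    (hΦ : ∀ q, Φ q = ∑ i : Fin k, ∑ j : Fin k,
      if i < j then (-1 : ℝ) ^ ((i : ℕ) + (j : ℕ)) * stdOmega (q i) (q j) else 0)
    (z zb : Fin k → (Fin n → ℝ) × (Fin n → ℝ)) :
    (∀ i, zb i = z (i + 1)) ↔
    (∀ (i : Fin k) (v : (Fin n → ℝ) × (Fin n → ℝ)),
      dotE (fun a => ((zb i).2 a - (z i).2 a) / 2, fun a => ((z i).1 a - (zb i).1 a) / 2) v =
      fderiv ℝ Φ (fun j => (1 / 2 : ℝ) • (z j + zb j)) (Pi.single i v)) := by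
  have hfd : ∀ (i : Fin k) (v : (Fin n → ℝ) × (Fin n → ℝ)),
      fderiv ℝ Φ (fun j => (1 / 2 : ℝ) • (z j + zb j)) (Pi.single i v)
        = stdOmega v (∑ j, eps i j • ((1 / 2 : ℝ) • (z j + zb j))) := by
    intro i v
    rw [(hasFDeriv_Phi Φ hΦ _).fderiv, DPhi_apply_single, ← stdOmega_sum]
  constructor
  · intro h i v
    rw [hfd i v]
    exact ((main_row z zb i).mpr (((comb hk z zb).mp h) i)) v
  · intro h
    refine (comb hk z zb).mpr fun i => (main_row z zb i).mp fun v => ?_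
    rw [← hfd i v]
    exact h i v
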